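/- arXiv:2110.10292 — 2 statements merged into one kernel-verified Lean document; each statement's English description precedes it below -/
import Mathlib

section
/- Let n ≥ 1, N = 2^n, 0 ≤ ε ≤ 1, and let E be an N×N unitary matrix over ℂ with |Tr(E)| ≥ N(1 − ε²). Let C₀ = ∑_{P ∈ 𝒫_n} r_P·P be an N×N matrix whose Pauli coefficients r_P satisfy: the support {P : r_P ≠ 0} has exactly M elements and |r_P| = 1/sqrt(M) for every P in the support. Then for every P₁ ∈ 𝒫_n with r_{P₁} ≠ 0: (1 − ε²)/sqrt(M) − sqrt(M)·sqrt(2ε² − ε⁴) ≤ |Tr(E·C₀·P₁)|/N ≤ 1/sqrt(M) + sqrt(M)·sqrt(2ε² − ε⁴). -/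
open Matrix
/-- The four single-qubit Pauli matrices: I, X, Y, Z. -/
noncomputable def pauliOne : Fin 4 → Matrix (Fin 2) (Fin 2) ℂ
  | 0 => 1
  | 1 => !![0, 1; 1, 0]
  | 2 => !![0, -Complex.I; Complex.I, 0]
  | 3 => !![1, 0; 0, -1]


lemma pauliOne_mul_self (k : Fin 4) : pauliOne k * pauliOne k = 1 := by
  fin_cases k <;> ext i j <;> fin_cases i <;> fin_cases j <;>
    simp [pauliOne, Matrix.mul_apply, Fin.sum_univ_two, Matrix.one_apply, Complex.I_mul_I] <;> ring_nf <;>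
    simp [Complex.I_mul_I]

lemma pauliOne_conjTranspose (k : Fin 4) : (pauliOne k)ᴴ = pauliOne k := by
  fin_cases k <;> ext i j <;> fin_cases i <;> fin_cases j <;>
    simp [pauliOne, Matrix.conjTranspose_apply]

lemma pauliOne_trace (k : Fin 4) : (pauliOne k).trace = if k = 0 then 2 else 0 := by
  fin_cases k <;> simp [pauliOne, Matrix.trace_fin_two]

lemma kron_trace {n : ℕ} (f : Fin n → Matrix (Fin 2) (Fin 2) ℂ) :
    (Matrix.of fun x y : Fin n → Fin 2 => ∏ i, f i (x i) (y i)).trace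
      = ∏ i, (f i).trace := by
  simp only [Matrix.trace, Matrix.diag, Matrix.of_apply]
  rw [Finset.prod_univ_sum]
  rfl

lemma kron_mul {n : ℕ} (f g : Fin n → Matrix (Fin 2) (Fin 2) ℂ) :
    (Matrix.of fun x y : Fin n → Fin 2 => ∏ i, f i (x i) (y i)) *
      (Matrix.of fun x y : Fin n → Fin 2 => ∏ i, g i (x i) (y i))
      = Matrix.of fun x y : Fin n → Fin 2 => ∏ i, (f i * g i) (x i) (y i) := by
  ext x y
  simp only [Matrix.mul_apply, Matrix.of_apply, ← Finset.prod_mul_distrib]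
  rw [Finset.prod_univ_sum]
  rfl

lemma kron_one {n : ℕ} :
    (Matrix.of fun x y : Fin n → Fin 2 => ∏ i, (1 : Matrix (Fin 2) (Fin 2) ℂ) (x i) (y i))
      = 1 := by
  ext x y
  by_cases h : x = y
  · subst h; simp [Matrix.one_apply]
  · obtain ⟨i, hi⟩ := Function.ne_iff.mp h
    simp only [Matrix.of_apply, Matrix.one_apply, if_neg h]
    exact Finset.prod_eq_zero (Finset.mem_univ i) (by simp [Matrix.one_apply, hi])

/-- The `n`-qubit Pauli matrix indexed by `s : Fin n → Fin 4`: the `n`-fold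
Kronecker (tensor) product of single-qubit Paulis, realized as a matrix on
the index type `Fin n → Fin 2` (of cardinality `2 ^ n`). -/
noncomputable def PauliTensor (n : ℕ) (s : Fin n → Fin 4) :
    Matrix (Fin n → Fin 2) (Fin n → Fin 2) ℂ :=
  Matrix.of fun x y => ∏ i, pauliOne (s i) (x i) (y i)

lemma PauliTensor_mul_self {n : ℕ} (s : Fin n → Fin 4) :
    PauliTensor n s * PauliTensor n s = 1 := by
  rw [PauliTensor, kron_mul]
  simp only [pauliOne_mul_self]
  exact kron_one

lemma PauliTensor_conjTranspose {n : ℕ} (s : Fin n → Fin 4) :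
    (PauliTensor n s)ᴴ = PauliTensor n s := by
  ext x y
  simp only [PauliTensor, Matrix.conjTranspose_apply, Matrix.of_apply, star_prod]
  refine Finset.prod_congr rfl fun i _ => ?_
  have := congrFun (congrFun (pauliOne_conjTranspose (s i)) (x i)) (y i)
  simpa [Matrix.conjTranspose_apply] using this

lemma pauliOne_mul_trace {a b : Fin 4} (h : a ≠ b) :
    (pauliOne a * pauliOne b).trace = 0 := by
  fin_cases a <;> fin_cases b <;> simp_all <;>
    simp [pauliOne, Matrix.trace_fin_two, Matrix.mul_apply, Fin.sum_univ_two]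

lemma PauliTensor_mul_trace {n : ℕ} {s t : Fin n → Fin 4} (h : s ≠ t) :
    (PauliTensor n s * PauliTensor n t).trace = 0 := by
  rw [PauliTensor, PauliTensor, kron_mul, kron_trace]
  obtain ⟨i, hi⟩ := Function.ne_iff.mp h
  exact Finset.prod_eq_zero (Finset.mem_univ i) (pauliOne_mul_trace hi)

lemma PauliTensor_trace_allZ {n : ℕ} (hn : 1 ≤ n) :
    (PauliTensor n (fun _ => 3)).trace = 0 := by
  rw [PauliTensor, kron_trace]
  refine Finset.prod_eq_zero (Finset.mem_univ ⟨0, hn⟩) ?_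
  simp [pauliOne_trace]

lemma trace_conjTranspose_mul_self_re_nonneg {ι : Type*} [Fintype ι] [DecidableEq ι]
    (G : Matrix ι ι ℂ) : 0 ≤ ((Gᴴ * G).trace).re := by
  have h : (Gᴴ * G).trace = ∑ j, ∑ i, (starRingEnd ℂ) (G i j) * G i j := by
    simp [Matrix.trace, Matrix.diag, Matrix.mul_apply, Matrix.conjTranspose_apply]
  rw [h]
  rw [Complex.re_sum]
  refine Finset.sum_nonneg fun j _ => ?_
  rw [Complex.re_sum]
  refine Finset.sum_nonneg fun i _ => ?_
  rw [Complex.conj_mul', ← Complex.ofReal_pow, Complex.ofReal_re]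
  positivity

/-- Two-vector Bessel inequality for the Frobenius inner product:
if `E` is unitary and `F` is co-unitary and traceless, then
`|Tr E|² + |Tr (F E)|² ≤ N²`. -/
lemma bessel_two {ι : Type*} [Fintype ι] [DecidableEq ι]
    (E F : Matrix ι ι ℂ) (hE : Eᴴ * E = 1) (hF : F * Fᴴ = 1) (hFtr : F.trace = 0) :
    ‖E.trace‖ ^ 2 + ‖(F * E).trace‖ ^ 2 ≤ (Fintype.card ι : ℝ) ^ 2 := by
  rcases Nat.eq_zero_or_pos (Fintype.card ι) with hc | hc
  · have hempty : IsEmpty ι := Fintype.card_eq_zero_iff.mp hc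
    simp [Matrix.trace, hc]
  set c : ℂ := (Fintype.card ι : ℂ) with hcdef
  set a : ℂ := E.trace with ha
  set b : ℂ := (F * E).trace with hb
  set G : Matrix ι ι ℂ := c • E - a • 1 - b • Fᴴ with hG
  have hGH : Gᴴ = (starRingEnd ℂ) c • Eᴴ - (starRingEnd ℂ) a • 1 - (starRingEnd ℂ) b • F := by
    simp [hG, Matrix.conjTranspose_sub, Matrix.conjTranspose_smul]
  have htrE' : Eᴴ.trace = (starRingEnd ℂ) a := by rw [Matrix.trace_conjTranspose]; rfl
  have htrF' : Fᴴ.trace = 0 := by rw [Matrix.trace_conjTranspose, hFtr]; simp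
  have htrEF : (Eᴴ * Fᴴ).trace = (starRingEnd ℂ) b := by
    rw [← Matrix.conjTranspose_mul, Matrix.trace_conjTranspose]; rfl
  have hcconj : (starRingEnd ℂ) c = c := by simp [hcdef]
  have hexp : (Gᴴ * G).trace
      = c ^ 3 - c * ((starRingEnd ℂ) a * a) - c * ((starRingEnd ℂ) b * b) := by
    rw [hGH, hG]
    simp only [Matrix.sub_mul, Matrix.mul_sub, Matrix.smul_mul, Matrix.mul_smul, smul_smul,
      Matrix.one_mul, Matrix.mul_one, hE, hF, Matrix.trace_sub, Matrix.trace_smul,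
      Matrix.trace_one, htrE', htrF', htrEF, hFtr, ← ha, ← hb, smul_eq_mul, hcconj]
    push_cast
    ring
  have hre := trace_conjTranspose_mul_self_re_nonneg G
  rw [hexp] at hre
  rw [Complex.conj_mul', Complex.conj_mul'] at hre
  rw [hcdef] at hre
  simp only [← Complex.ofReal_natCast, ← Complex.ofReal_pow, ← Complex.ofReal_mul,
    ← Complex.ofReal_sub, Complex.ofReal_re] at hre ⊢
  have hN : 0 < (Fintype.card ι : ℝ) := by exact_mod_cast hc
  nlinarith [sq_nonneg (‖E.trace‖), sq_nonneg (‖(F * E).trace‖)]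
/-- Theorem: bounds on `|Tr (E * C₀ * P₁)| / N` for `P₁` in the support of the
Pauli expansion of `C₀`, when `E` is a unitary with `|Tr E| ≥ N (1 - ε²)` and
all nonzero Pauli coefficients of `C₀` have modulus `1 / √M`, `M` being the
size of the support. -/
theorem trace_bound_support (n : ℕ) (hn : 1 ≤ n)
    (ε : ℝ) (hε0 : 0 ≤ ε) (hε1 : ε ≤ 1)
    (E : Matrix (Fin n → Fin 2) (Fin n → Fin 2) ℂ)
    (hE : E ∈ Matrix.unitaryGroup (Fin n → Fin 2) ℂ)
    (hEtr : (2 : ℝ) ^ n * (1 - ε ^ 2) ≤ ‖E.trace‖)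
    (r : (Fin n → Fin 4) → ℂ) (C₀ : Matrix (Fin n → Fin 2) (Fin n → Fin 2) ℂ)
    (hC₀ : C₀ = ∑ s : Fin n → Fin 4, r s • PauliTensor n s)
    (M : ℕ) (hM : (Finset.univ.filter (fun s => r s ≠ 0)).card = M)
    (hr : ∀ s : Fin n → Fin 4, r s ≠ 0 → ‖r s‖ = 1 / Real.sqrt M)
    (s₁ : Fin n → Fin 4) (hs₁ : r s₁ ≠ 0) :
    (1 - ε ^ 2) / Real.sqrt M - Real.sqrt M * Real.sqrt (2 * ε ^ 2 - ε ^ 4)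
        ≤ ‖(E * C₀ * PauliTensor n s₁).trace‖ / (2 : ℝ) ^ n ∧
      ‖(E * C₀ * PauliTensor n s₁).trace‖ / (2 : ℝ) ^ n
        ≤ 1 / Real.sqrt M + Real.sqrt M * Real.sqrt (2 * ε ^ 2 - ε ^ 4) := by
  classical
  set N : ℝ := (2 : ℝ) ^ n with hNdef
  have hN : 0 < N := by positivity
  set δ : ℝ := 2 * ε ^ 2 - ε ^ 4 with hδdef
  have hε2 : 0 ≤ 1 - ε ^ 2 := by nlinarith [mul_le_one₀ hε1 hε0 hε1, sq_nonneg ε]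
  have hδ0 : 0 ≤ δ := by
    have h4 : ε ^ 4 ≤ ε ^ 2 := pow_le_pow_of_le_one hε0 hε1 (by norm_num)
    nlinarith [sq_nonneg ε]
  have hcard : ((Fintype.card (Fin n → Fin 2) : ℝ)) = N := by
    simp [hNdef]
  have hEu : Eᴴ * E = 1 := by
    rw [← Matrix.star_eq_conjTranspose]; exact hE.1
  -- |Tr E| ≤ N
  have habsE_le : ‖E.trace‖ ≤ N := by
    have hFF : PauliTensor n (fun _ => 3) * (PauliTensor n (fun _ => 3))ᴴ = 1 := by
      rw [PauliTensor_conjTranspose, PauliTensor_mul_self]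
    have hb := bessel_two E (PauliTensor n (fun _ => 3)) hEu hFF (PauliTensor_trace_allZ hn)
    rw [hcard] at hb
    nlinarith [norm_nonneg E.trace, norm_nonneg ((PauliTensor n (fun _ => 3) * E).trace), sq_nonneg (‖(PauliTensor n (fun _ => 3) * E).trace‖)]
  -- per-term bound for s ≠ s₁
  have hterm : ∀ s : Fin n → Fin 4, s ≠ s₁ →
      ‖(E * (PauliTensor n s * PauliTensor n s₁)).trace‖ ≤ N * Real.sqrt δ := by
    intro s hne
    set F := PauliTensor n s * PauliTensor n s₁ with hFdef
    have hFH : Fᴴ = PauliTensor n s₁ * PauliTensor n s := by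
      rw [hFdef, Matrix.conjTranspose_mul, PauliTensor_conjTranspose, PauliTensor_conjTranspose]
    have hFF : F * Fᴴ = 1 := by
      rw [hFH, hFdef, Matrix.mul_assoc, ← Matrix.mul_assoc (PauliTensor n s₁),
        PauliTensor_mul_self, Matrix.one_mul, PauliTensor_mul_self]
    have hb := bessel_two E F hEu hFF (PauliTensor_mul_trace hne)
    rw [hcard] at hb
    rw [Matrix.trace_mul_comm]
    have h1 : ‖(F * E).trace‖ ^ 2 ≤ N ^ 2 * δ := by
      nlinarith [mul_self_le_mul_self (mul_nonneg hN.le hε2) hEtr]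
    have h2 := (Real.le_sqrt (norm_nonneg ((F * E).trace)) (by positivity)).mpr h1
    rwa [Real.sqrt_mul (by positivity), Real.sqrt_sq hN.le] at h2
  -- expand the trace as a sum
  set t : (Fin n → Fin 4) → ℂ := fun s => (E * (PauliTensor n s * PauliTensor n s₁)).trace with htdef
  have hT : (E * C₀ * PauliTensor n s₁).trace = ∑ s : Fin n → Fin 4, r s * t s := by
    rw [hC₀, Matrix.mul_sum, Matrix.sum_mul, Matrix.trace_sum]
    refine Finset.sum_congr rfl fun s _ => ?_
    rw [Matrix.mul_smul, Matrix.smul_mul, Matrix.trace_smul, smul_eq_mul, Matrix.mul_assoc]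
  have hts₁ : t s₁ = E.trace := by
    rw [htdef]; simp only [PauliTensor_mul_self, Matrix.mul_one]
  have hsplit : (E * C₀ * PauliTensor n s₁).trace
      = r s₁ * E.trace + ∑ s ∈ Finset.univ.erase s₁, r s * t s := by
    rw [hT, ← Finset.add_sum_erase _ _ (Finset.mem_univ s₁), hts₁]
  set R : ℂ := ∑ s ∈ Finset.univ.erase s₁, r s * t s with hRdef
  -- M facts
  have hs₁mem : s₁ ∈ Finset.univ.filter (fun s => r s ≠ 0) := by
    simp [hs₁]
  have hM1 : 1 ≤ M := by
    rw [← hM]; exact Finset.card_pos.mpr ⟨s₁, hs₁mem⟩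
  set m : ℝ := Real.sqrt M with hmdef
  have hm : 0 < m := Real.sqrt_pos.mpr (by exact_mod_cast hM1)
  have hmm : m * m = M := Real.mul_self_sqrt (by positivity)
  -- sum of |r s| over erase
  have hsum_r : ∑ s ∈ Finset.univ.erase s₁, ‖r s‖ = ((M : ℝ) - 1) / m := by
    have he : ∑ s ∈ Finset.univ.erase s₁, ‖r s‖
        = ∑ s ∈ ((Finset.univ.filter (fun s => r s ≠ 0)).erase s₁), ‖r s‖ := by
      refine (Finset.sum_subset ?_ ?_).symm
      · intro x hx
        rw [Finset.mem_erase] at hx ⊢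
        exact ⟨hx.1, Finset.mem_univ x⟩
      · intro x hx hnx
        rw [Finset.mem_erase] at hx hnx
        push_neg at hnx
        have := hnx hx.1
        simp only [Finset.mem_filter, Finset.mem_univ, true_and, not_not] at this
        simp [this]
    rw [he, Finset.sum_congr rfl (fun x hx => hr x (by
      rw [Finset.mem_erase, Finset.mem_filter] at hx; exact hx.2.2)),
      Finset.sum_const, Finset.card_erase_of_mem hs₁mem, hM]
    rw [nsmul_eq_mul, Nat.cast_sub hM1, hmdef]
    push_cast
    ring
  -- bound on R
  have hR : ‖R‖ ≤ m * (N * Real.sqrt δ) := by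
    calc ‖R‖ ≤ ∑ s ∈ Finset.univ.erase s₁, ‖r s * t s‖ :=
          norm_sum_le _ _
      _ ≤ ∑ s ∈ Finset.univ.erase s₁, ‖r s‖ * (N * Real.sqrt δ) := by
          refine Finset.sum_le_sum fun s hs => ?_
          rw [norm_mul]
          exact mul_le_mul_of_nonneg_left (hterm s (Finset.mem_erase.mp hs).1)
            (norm_nonneg _)
      _ = (((M : ℝ) - 1) / m) * (N * Real.sqrt δ) := by rw [← Finset.sum_mul, hsum_r]
      _ ≤ m * (N * Real.sqrt δ) := by
          have h1 : ((M : ℝ) - 1) / m ≤ m := by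
            rw [div_le_iff₀ hm]
            nlinarith
          exact mul_le_mul_of_nonneg_right h1 (by positivity)
  have habs_r1 : ‖r s₁‖ = 1 / m := hr s₁ hs₁
  have hlow : N * (1 - ε ^ 2) / m - ‖R‖ ≤ ‖(E * C₀ * PauliTensor n s₁).trace‖ := by
    have h1 : ‖r s₁ * E.trace‖
        ≤ ‖(E * C₀ * PauliTensor n s₁).trace‖ + ‖R‖ := by
      have : r s₁ * E.trace = (E * C₀ * PauliTensor n s₁).trace - R := by
        rw [hsplit]; ring
      rw [this]
      simpa [sub_eq_add_neg] using norm_add_le ((E * C₀ * PauliTensor n s₁).trace) (-R)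
    have h2 : N * (1 - ε ^ 2) / m ≤ ‖r s₁ * E.trace‖ := by
      rw [norm_mul, habs_r1, one_div_mul_eq_div]
      exact div_le_div_of_nonneg_right hEtr hm.le
    linarith
  have hup : ‖(E * C₀ * PauliTensor n s₁).trace‖ ≤ N / m + ‖R‖ := by
    rw [hsplit]
    calc ‖r s₁ * E.trace + R‖ ≤ ‖r s₁ * E.trace‖ + ‖R‖ :=
          norm_add_le _ _
      _ ≤ N / m + ‖R‖ := by
          rw [norm_mul, habs_r1]
          have h3 : 1 / m * ‖E.trace‖ ≤ 1 / m * N :=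
            mul_le_mul_of_nonneg_left habsE_le (by positivity)
          have h4 : 1 / m * N = N / m := by ring
          linarith
  constructor
  · rw [le_div_iff₀ hN]
    have : ((1 - ε ^ 2) / m - m * Real.sqrt δ) * N = N * (1 - ε ^ 2) / m - m * (N * Real.sqrt δ) := by
      ring
    rw [this]
    linarith
  · rw [div_le_iff₀ hN]
    have : (1 / m + m * Real.sqrt δ) * N = N / m + m * (N * Real.sqrt δ) := by ring
    rw [this]
    linarith
end

section
/- Let n ≥ 1, N = 2^n, 0 ≤ ε ≤ 1, and let E be an N×N unitary matrix over ℂ with |Tr(E)| ≥ N(1 − ε²). Let C₀ = ∑_{P ∈ 𝒫_n} r_P·P be an N×N matrix whose Pauli coefficients r_P satisfy: the support {P : r_P ≠ 0} has exactly M elements and |r_P| = 1/sqrt(M) for every P in the support. Then for every P₁ ∈ 𝒫_n with r_{P₁} = 0: 0 ≤ |Tr(E·C₀·P₁)|/N ≤ sqrt(M)·sqrt(2ε² − ε⁴). -/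
open Matrix

lemma pauli_star (a : Fin 4) (x y : Fin 2) :
    (starRingEnd ℂ) (pauliOne a x y) = pauliOne a y x := by
  fin_cases a <;> fin_cases x <;> fin_cases y <;>
    simp [pauliOne, Matrix.one_apply]

lemma pauli_mul_self (a : Fin 4) : pauliOne a * pauliOne a = 1 := by
  fin_cases a <;> simp [pauliOne] <;>
    ext x y <;> fin_cases x <;> fin_cases y <;>
      simp [Matrix.mul_apply, Fin.sum_univ_two, Matrix.one_apply, Complex.ext_iff]

lemma pauli_trace_mul (a b : Fin 4) :
    (pauliOne a * pauliOne b).trace = if a = b then 2 else 0 := by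
  fin_cases a <;> fin_cases b <;>
    simp [pauliOne, Matrix.trace, Matrix.diag, Matrix.mul_apply, Fin.sum_univ_two,
      Matrix.one_apply, Complex.ext_iff] <;> ring_nf <;> simp [Complex.I_sq, Complex.ext_iff] <;> ring

lemma PT_mul (n : ℕ) (s t : Fin n → Fin 4) :
    PauliTensor n s * PauliTensor n t =
      Matrix.of fun x y => ∏ i, (pauliOne (s i) * pauliOne (t i)) (x i) (y i) := by
  ext x y
  simp only [Matrix.mul_apply, PauliTensor, Matrix.of_apply]
  rw [show (fun z : Fin n → Fin 2 => (∏ i, pauliOne (s i) (x i) (z i)) *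
      ∏ i, pauliOne (t i) (z i) (y i)) =
      fun z => ∏ i, pauliOne (s i) (x i) (z i) * pauliOne (t i) (z i) (y i) from
    funext fun z => (Finset.prod_mul_distrib).symm]
  rw [← Fintype.prod_sum (fun i (a : Fin 2) => pauliOne (s i) (x i) a * pauliOne (t i) a (y i))]

lemma PT_mul_self (n : ℕ) (s : Fin n → Fin 4) :
    PauliTensor n s * PauliTensor n s = 1 := by
  rw [PT_mul]
  ext x y
  simp only [Matrix.of_apply, pauli_mul_self, Matrix.one_apply]
  by_cases h : x = y
  · simp [h]
  · obtain ⟨i, hi⟩ := Function.ne_iff.1 h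
    rw [if_neg h]
    exact Finset.prod_eq_zero (Finset.mem_univ i) (by simp [hi])

lemma PT_trace_mul (n : ℕ) (s t : Fin n → Fin 4) :
    (PauliTensor n s * PauliTensor n t).trace = if s = t then (2 : ℂ) ^ n else 0 := by
  rw [PT_mul]
  simp only [Matrix.trace, Matrix.diag, Matrix.of_apply]
  rw [← Fintype.prod_sum (fun i (a : Fin 2) => (pauliOne (s i) * pauliOne (t i)) a a)]
  have : ∀ i, (∑ a : Fin 2, (pauliOne (s i) * pauliOne (t i)) a a) =
      if s i = t i then (2:ℂ) else 0 := by
    intro i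
    simpa [Matrix.trace, Matrix.diag] using pauli_trace_mul (s i) (t i)
  simp only [this]
  by_cases h : s = t
  · simp [h]
  · obtain ⟨i, hi⟩ := Function.ne_iff.1 h
    rw [if_neg h]
    exact Finset.prod_eq_zero (Finset.mem_univ i) (by simp [hi])

lemma PT_conjTranspose (n : ℕ) (s : Fin n → Fin 4) :
    (PauliTensor n s)ᴴ = PauliTensor n s := by
  ext x y
  simp only [Matrix.conjTranspose_apply, PauliTensor, Matrix.of_apply]
  rw [show (star : ℂ → ℂ) = ⇑(starRingEnd ℂ) from rfl, map_prod]
  simp [pauli_star]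

lemma trace_mul_conjTranspose_eq {ι : Type*} [Fintype ι] [DecidableEq ι]
    (B : Matrix ι ι ℂ) :
    (B * Bᴴ).trace = ((∑ i, ∑ j, Complex.normSq (B i j) : ℝ) : ℂ) := by
  simp only [Matrix.trace, Matrix.diag, Matrix.mul_apply, Matrix.conjTranspose_apply,
    Complex.star_def, Complex.mul_conj]
  push_cast
  rfl


set_option maxHeartbeats 1000000 in
/-- Theorem: bounds on `|Tr (E * C₀ * P₁)| / N` for `P₁` outside the support of
the Pauli expansion of `C₀`, when `E` is a unitary with `|Tr E| ≥ N (1 - ε²)` and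
all nonzero Pauli coefficients of `C₀` have modulus `1 / √M`, `M` being the
size of the support. -/
theorem trace_bound_offsupport (n : ℕ) (hn : 1 ≤ n)
    (ε : ℝ) (hε0 : 0 ≤ ε) (hε1 : ε ≤ 1)
    (E : Matrix (Fin n → Fin 2) (Fin n → Fin 2) ℂ)
    (hE : E ∈ Matrix.unitaryGroup (Fin n → Fin 2) ℂ)
    (hEtr : (2 : ℝ) ^ n * (1 - ε ^ 2) ≤ ‖E.trace‖)
    (r : (Fin n → Fin 4) → ℂ) (C₀ : Matrix (Fin n → Fin 2) (Fin n → Fin 2) ℂ)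
    (hC₀ : C₀ = ∑ s : Fin n → Fin 4, r s • PauliTensor n s)
    (M : ℕ) (hM : (Finset.univ.filter (fun s => r s ≠ 0)).card = M)
    (hr : ∀ s : Fin n → Fin 4, r s ≠ 0 → ‖r s‖ = 1 / Real.sqrt M)
    (s₁ : Fin n → Fin 4) (hs₁ : r s₁ = 0) :
    0 ≤ ‖(E * C₀ * PauliTensor n s₁).trace‖ / (2 : ℝ) ^ n ∧
      ‖(E * C₀ * PauliTensor n s₁).trace‖ / (2 : ℝ) ^ n
        ≤ Real.sqrt M * Real.sqrt (2 * ε ^ 2 - ε ^ 4) := by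
  have hN0 : (0:ℝ) < (2:ℝ)^n := by positivity
  refine ⟨by positivity, ?_⟩
  have hε2 : ε ^ 2 ≤ 1 := by nlinarith
  have hee : (0:ℝ) ≤ 2 * ε ^ 2 - ε ^ 4 := by nlinarith
  rcases Nat.eq_zero_or_pos M with hM0 | hM1
  · subst hM0
    have hr0 : ∀ s, r s = 0 := by
      intro s
      by_contra h
      have hmem : s ∈ Finset.univ.filter (fun s => r s ≠ 0) := by simp [h]
      rw [Finset.card_eq_zero.mp hM] at hmem
      exact absurd hmem (Finset.notMem_empty s)
    have hC0 : C₀ = 0 := by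
      rw [hC₀]; exact Finset.sum_eq_zero fun s _ => by simp [hr0 s]
    rw [hC0]
    simp only [Matrix.mul_zero, Matrix.zero_mul, Matrix.trace_zero, map_zero, norm_zero, zero_div]
    positivity
  -- main case
  have hcard : Fintype.card (Fin n → Fin 2) = 2 ^ n := by
    simp [Fintype.card_fun]
  have hEE : E * Eᴴ = 1 := by
    have h := hE.2
    rwa [Matrix.star_eq_conjTranspose] at h
  -- trace (C₀ * P₁) = 0
  have hBtr : (C₀ * PauliTensor n s₁).trace = 0 := by
    rw [hC₀, Finset.sum_mul]
    simp only [Matrix.smul_mul]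
    rw [Matrix.trace_sum]
    simp only [Matrix.trace_smul, PT_trace_mul, smul_eq_mul, mul_ite, mul_zero]
    simp [Finset.sum_ite_eq', hs₁]
  -- sum of |E i j|² = 2^n
  have hSE : (∑ i, ∑ j, Complex.normSq (E i j)) = 2 ^ n := by
    have h1 := trace_mul_conjTranspose_eq E
    rw [hEE, Matrix.trace_one, hcard] at h1
    exact_mod_cast h1.symm
  -- sum of normSq r = 1
  have hMR : (0:ℝ) < (M:ℝ) := by exact_mod_cast hM1
  have hr1 : ∑ s, Complex.normSq (r s) = 1 := by
    rw [← Finset.sum_filter_of_ne (p := fun s => r s ≠ 0)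
      (fun x _ hx => by simpa using fun h => hx (by simp [h]))]
    have hterm : ∀ s ∈ Finset.univ.filter (fun s => r s ≠ 0),
        Complex.normSq (r s) = 1 / (M:ℝ) := by
      intro s hs
      have hrs : r s ≠ 0 := (Finset.mem_filter.mp hs).2
      have := hr s hrs
      rw [← Complex.sq_norm, this]
      rw [div_pow, one_pow, Real.sq_sqrt hMR.le]
    rw [Finset.sum_congr rfl hterm, Finset.sum_const, hM, nsmul_eq_mul]
    field_simp
  -- trace (C₀ * C₀ᴴ) = 2^n
  have htrCC : (C₀ * C₀ᴴ).trace = (2:ℂ)^n := by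
    rw [hC₀, Matrix.conjTranspose_sum]
    simp only [Matrix.conjTranspose_smul, PT_conjTranspose]
    rw [Finset.sum_mul]
    simp only [Finset.mul_sum, Matrix.smul_mul, Matrix.mul_smul, Matrix.trace_sum,
      Matrix.trace_smul, PT_trace_mul, smul_eq_mul, Finset.smul_sum, smul_smul]
    simp only [mul_ite, mul_zero]
    have step : (∑ x : Fin n → Fin 4, ∑ y : Fin n → Fin 4,
        if x = y then star (r y) * r x * (2:ℂ)^n else 0)
        = ∑ x : Fin n → Fin 4, (Complex.normSq (r x) : ℂ) * (2:ℂ)^n := by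
      refine Finset.sum_congr rfl fun x _ => ?_
      rw [Finset.sum_ite_eq Finset.univ x (fun y => star (r y) * r x * (2:ℂ)^n)]
      simp only [Finset.mem_univ, if_true, Complex.star_def]
      rw [Complex.normSq_eq_conj_mul_self]
    rw [step, ← Finset.sum_mul, ← Complex.ofReal_sum, hr1]
    simp
  -- B * Bᴴ = C₀ * C₀ᴴ
  have hBB : (C₀ * PauliTensor n s₁) * (C₀ * PauliTensor n s₁)ᴴ = C₀ * C₀ᴴ := by
    rw [Matrix.conjTranspose_mul, PT_conjTranspose,
      Matrix.mul_assoc, ← Matrix.mul_assoc (PauliTensor n s₁), PT_mul_self, Matrix.one_mul]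
  have hSB : (∑ i, ∑ j, Complex.normSq ((C₀ * PauliTensor n s₁) i j)) = 2 ^ n := by
    have h1 := trace_mul_conjTranspose_eq (C₀ * PauliTensor n s₁)
    rw [hBB, htrCC] at h1
    exact_mod_cast h1.symm
  -- the deviation matrix
  set a : ℂ := E.trace / (2:ℂ)^n with ha
  set D : Matrix (Fin n → Fin 2) (Fin n → Fin 2) ℂ := E - a • 1 with hD
  have h2nC : ((2:ℂ)^n) ≠ 0 := pow_ne_zero _ two_ne_zero
  have hDtr : (D * Dᴴ).trace = (2:ℂ)^n - (Complex.normSq E.trace : ℂ) / (2:ℂ)^n := by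
    rw [hD]
    simp only [Matrix.conjTranspose_sub, Matrix.conjTranspose_smul, Matrix.conjTranspose_one,
      Matrix.sub_mul, Matrix.mul_sub, Matrix.smul_mul, Matrix.mul_smul, Matrix.one_mul,
      Matrix.mul_one, smul_smul, Matrix.trace_sub, Matrix.trace_smul, Matrix.trace_one,
      hEE, Matrix.trace_conjTranspose, hcard, smul_eq_mul]
    rw [ha]
    push_cast
    simp only [Complex.star_def]
    have hz : E.trace - E.trace / (2:ℂ)^n * (2:ℂ)^n = 0 := by field_simp; ring
    rw [hz, mul_zero, sub_zero, div_mul_eq_mul_div, Complex.mul_conj]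
  have hSD : (∑ i, ∑ j, Complex.normSq (D i j)) ≤ 2^n * (2 * ε^2 - ε^4) := by
    have heq : ((∑ i, ∑ j, Complex.normSq (D i j) : ℝ) : ℂ)
        = (2:ℂ)^n - (Complex.normSq E.trace : ℂ) / (2:ℂ)^n :=
      (trace_mul_conjTranspose_eq D).symm.trans hDtr
    have heqR : (∑ i, ∑ j, Complex.normSq (D i j))
        = 2^n - Complex.normSq E.trace / 2^n := by
      exact_mod_cast heq
    rw [heqR]
    have habs : (‖E.trace‖)^2 = Complex.normSq E.trace := Complex.sq_norm _
    have h1 : (0:ℝ) ≤ (2:ℝ)^n * (1 - ε^2) := by nlinarith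
    have h2 : ((2:ℝ)^n * (1-ε^2))^2 ≤ Complex.normSq E.trace := by
      rw [← habs]; nlinarith [norm_nonneg E.trace]
    have h3 : (2:ℝ)^n * (1-ε^2)^2 ≤ Complex.normSq E.trace / 2^n := by
      rw [le_div_iff₀ hN0]; nlinarith
    nlinarith
  -- replace E by D in the trace
  have hT : (E * C₀ * PauliTensor n s₁).trace
      = (D * (C₀ * PauliTensor n s₁)).trace := by
    rw [hD, Matrix.sub_mul, Matrix.smul_mul, Matrix.one_mul, Matrix.trace_sub,
      Matrix.trace_smul, hBtr, smul_zero, sub_zero, Matrix.mul_assoc]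
  -- Cauchy-Schwarz
  have hCS : ‖(D * (C₀ * PauliTensor n s₁)).trace‖
      ≤ Real.sqrt (∑ i, ∑ j, Complex.normSq (D i j))
        * Real.sqrt (∑ i, ∑ j, Complex.normSq ((C₀ * PauliTensor n s₁) i j)) := by
    set B := C₀ * PauliTensor n s₁ with hBdef
    have htr : (D * B).trace = ∑ p : (Fin n → Fin 2) × (Fin n → Fin 2),
        D p.1 p.2 * B p.2 p.1 := by
      rw [Fintype.sum_prod_type]
      simp [Matrix.trace, Matrix.diag, Matrix.mul_apply]
    rw [htr]
    calc ‖∑ p : (Fin n → Fin 2) × (Fin n → Fin 2), D p.1 p.2 * B p.2 p.1‖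
        ≤ ∑ p : (Fin n → Fin 2) × (Fin n → Fin 2),
            ‖D p.1 p.2‖ * ‖B p.2 p.1‖ := by
          simpa [_root_.map_mul] using
            norm_sum_le Finset.univ (fun p : (Fin n → Fin 2) × (Fin n → Fin 2) =>
              D p.1 p.2 * B p.2 p.1)
      _ ≤ Real.sqrt (∑ p : (Fin n → Fin 2) × (Fin n → Fin 2), ‖D p.1 p.2‖ ^ 2)
            * Real.sqrt (∑ p : (Fin n → Fin 2) × (Fin n → Fin 2), ‖B p.2 p.1‖ ^ 2) :=
          Real.sum_mul_le_sqrt_mul_sqrt _ _ _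
      _ = Real.sqrt (∑ i, ∑ j, Complex.normSq (D i j))
            * Real.sqrt (∑ i, ∑ j, Complex.normSq (B i j)) := by
          rw [Fintype.sum_prod_type, Fintype.sum_prod_type]
          simp only [Complex.sq_norm]
          congr 1
          rw [show (∑ x : Fin n → Fin 2, ∑ y : Fin n → Fin 2, Complex.normSq (B y x))
            = ∑ i, ∑ j, Complex.normSq (B i j) from Finset.sum_comm]
  -- put it together
  have hfinal : ‖(E * C₀ * PauliTensor n s₁).trace‖
      ≤ (2:ℝ)^n * Real.sqrt (2 * ε^2 - ε^4) := by
    rw [hT]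
    refine hCS.trans ?_
    rw [hSB]
    have e1 : Real.sqrt (∑ i, ∑ j, Complex.normSq (D i j))
        ≤ Real.sqrt ((2:ℝ)^n * (2 * ε^2 - ε^4)) := Real.sqrt_le_sqrt hSD
    calc Real.sqrt (∑ i, ∑ j, Complex.normSq (D i j)) * Real.sqrt ((2:ℝ)^n)
        ≤ Real.sqrt ((2:ℝ)^n * (2 * ε^2 - ε^4)) * Real.sqrt ((2:ℝ)^n) :=
          mul_le_mul_of_nonneg_right e1 (Real.sqrt_nonneg _)
      _ = (2:ℝ)^n * Real.sqrt (2 * ε^2 - ε^4) := by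
          rw [Real.sqrt_mul hN0.le]
          rw [mul_comm (Real.sqrt ((2:ℝ)^n)) _, mul_assoc, Real.mul_self_sqrt hN0.le]
          ring
  rw [div_le_iff₀ hN0]
  have hsqM : (1:ℝ) ≤ Real.sqrt M := by
    rw [show (1:ℝ) = Real.sqrt 1 from (Real.sqrt_one).symm]
    exact Real.sqrt_le_sqrt (by exact_mod_cast hM1)
  calc ‖(E * C₀ * PauliTensor n s₁).trace‖
      ≤ (2:ℝ)^n * Real.sqrt (2 * ε^2 - ε^4) := hfinal
    _ = Real.sqrt (2 * ε^2 - ε^4) * (2:ℝ)^n := by ring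
    _ ≤ Real.sqrt M * Real.sqrt (2 * ε^2 - ε^4) * (2:ℝ)^n := by
        have h := mul_le_mul_of_nonneg_right hsqM
          (mul_nonneg (Real.sqrt_nonneg (2 * ε ^ 2 - ε ^ 4)) hN0.le)
        rw [one_mul] at h
        nlinarith [h]
end
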